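/- Let E: K̂(Var_C) → Z[u,v][[1/uv]] be the E-polynomial ring homomorphism. For the genus-g curve X and every integer k ≥ 0, E(P_X(L^k)) = (1 − u^{k+1}v^k)^g (1 − u^k v^{k+1})^g, where P_X(x) = Σ_{i=0}^{2g} λ^i(h¹(X)) x^i. -/
import Mathlib


/-!
STATEMENT 16. `E(P_X(𝕃^k)) = (1 - u^{k+1}v^k)^g (1 - u^k v^{k+1})^g`.

The E-polynomial is modeled as a ring homomorphism `Emap` from the abstract
completed Grothendieck ring `R` to a commutative ring `S` containing `u, v`
(playing the role of `ℤ[u,v][[1/uv]]`), with `E(𝕃) = uv`.  The context fact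
that `Jac(X)` is a `g`-dimensional abelian variety with Hodge numbers
`h^{p,q} = C(g,p)·C(g,q)` gives
`E(λ^i(h¹(X))) = Σ_{p+q=i} (-1)^i C(g,p) C(g,q) u^p v^q` (hypothesis `hEP`).
Then `P_X(𝕃^k) = Σ_{i=0}^{2g} λ^i(h¹(X)) 𝕃^{ki}` and the conclusion is the
displayed product formula.
-/
theorem E_polynomial_PX_at_Lk
    {R S : Type*} [CommRing R] [CommRing S]
    (Emap : R →+* S) (u v : S)
    (𝕃 h1 : R) (lam : ℕ → R → R) (g k : ℕ)
    (hEL : Emap 𝕃 = u * v)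
    (hEP : ∀ i : ℕ, Emap (lam i h1)
        = ∑ p ∈ Finset.range (i + 1),
            (-1 : S) ^ i * ((Nat.choose g p * Nat.choose g (i - p) : ℕ) : S)
              * u ^ p * v ^ (i - p)) :
    Emap (∑ i ∈ Finset.range (2 * g + 1), lam i h1 * 𝕃 ^ (k * i))
      = (1 - u ^ (k + 1) * v ^ k) ^ g * (1 - u ^ k * v ^ (k + 1)) ^ g := by
  set G : ℕ → ℕ → S := fun p q =>
    (-1 : S) ^ (p + q) * ((Nat.choose g p : S) * (Nat.choose g q : S))
      * u ^ p * v ^ q * (u * v) ^ (k * (p + q)) with hG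
  calc Emap (∑ i ∈ Finset.range (2 * g + 1), lam i h1 * 𝕃 ^ (k * i))
      = ∑ i ∈ Finset.range (2 * g + 1), ∑ p ∈ Finset.range (i + 1), G p (i - p) := by
        rw [map_sum]
        refine Finset.sum_congr rfl fun i _ => ?_
        rw [map_mul, map_pow, hEL, hEP, Finset.sum_mul]
        refine Finset.sum_congr rfl fun p hp => ?_
        have hpi : p ≤ i := Nat.lt_succ_iff.mp (Finset.mem_range.mp hp)
        simp only [hG]
        rw [Nat.add_sub_cancel' hpi]
        push_cast
        ring
    _ = ∑ p ∈ Finset.range (2 * g + 1), ∑ q ∈ Finset.range (2 * g + 1 - p), G p q :=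
        Finset.sum_range_diag_flip (2 * g + 1) G
    _ = ∑ p ∈ Finset.range (g + 1), ∑ q ∈ Finset.range (2 * g + 1 - p), G p q := by
        refine (Finset.sum_subset (Finset.range_subset_range.mpr (by omega)) ?_).symm
        intro p _ hp'
        have hgp : g < p := by
          simpa [Nat.lt_succ_iff, not_le] using hp'
        refine Finset.sum_eq_zero fun q _ => ?_
        simp [hG, Nat.choose_eq_zero_of_lt hgp]
    _ = ∑ p ∈ Finset.range (g + 1), ∑ q ∈ Finset.range (g + 1), G p q := by
        refine Finset.sum_congr rfl fun p hp => ?_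
        have hpg : p ≤ g := Nat.lt_succ_iff.mp (Finset.mem_range.mp hp)
        refine (Finset.sum_subset (Finset.range_subset_range.mpr (by omega)) ?_).symm
        intro q _ hq'
        have hgq : g < q := by
          simpa [Nat.lt_succ_iff, not_le] using hq'
        simp [hG, Nat.choose_eq_zero_of_lt hgq]
    _ = (1 - u ^ (k + 1) * v ^ k) ^ g * (1 - u ^ k * v ^ (k + 1)) ^ g := by
        rw [sub_eq_add_neg, sub_eq_add_neg, add_comm (1 : S), add_comm (1 : S),
          add_pow, add_pow, Finset.sum_mul_sum]
        refine Finset.sum_congr rfl fun p _ => Finset.sum_congr rfl fun q _ => ?_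
        simp only [hG, one_pow]
        ring
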